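/- If v is a vertex of a graph G such that G − v is a forest, then G admits a 2-edge-coloring that is odd at every vertex other than v. -/

import Mathlib

open SimpleGraph Finset

variable {V : Type*} [Fintype V] [DecidableEq V]

/-- Number of edges incident to `v` receiving color `i` under the edge-coloring `f`. -/
def colorCount (G : SimpleGraph V) [DecidableRel G.Adj] {k : ℕ}
    (f : Sym2 V → Fin k) (v : V) (i : Fin k) : ℕ :=
  ((G.incidenceFinset v).filter (fun e => f e = i)).card

/-- The edge-coloring `f` is odd at the vertex `v`: every color appearing at `v`
appears an odd number of times at `v`. -/
def OddAt (G : SimpleGraph V) [DecidableRel G.Adj] {k : ℕ}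
    (f : Sym2 V → Fin k) (v : V) : Prop :=
  ∀ i : Fin k, colorCount G f v i = 0 ∨ Odd (colorCount G f v i)

/-- An odd edge-coloring: odd at every vertex. -/
def IsOddColoring (G : SimpleGraph V) [DecidableRel G.Adj] {k : ℕ}
    (f : Sym2 V → Fin k) : Prop :=
  ∀ v : V, OddAt G f v

/-- The odd chromatic index: least `k` admitting an odd `k`-edge-coloring. -/
noncomputable def oddChromIndex (G : SimpleGraph V) [DecidableRel G.Adj] : ℕ :=
  sInf {k | ∃ f : Sym2 V → Fin k, IsOddColoring G f}

namespace OddForestAux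

lemma fin2_cases : ∀ i : Fin 2, i = 0 ∨ i = 1 := by decide

lemma fin2_not_zero : ∀ i : Fin 2, (¬ i = 0) ↔ i = 1 := by decide

/-- Any graph below an acyclic graph is acyclic. -/
lemma acyclic_anti {W : Type*} {G H : SimpleGraph W} (h : G ≤ H) (hH : H.IsAcyclic) :
    G.IsAcyclic := fun _ c hc => hH (c.mapLe h) (hc.mapLe h)

/-- An acyclic graph with an edge has a vertex with a unique neighbor. -/
lemma exists_leaf {W : Type*} [Fintype W] {H : SimpleGraph W} (hH : H.IsAcyclic)
    {a b : W} (hab : H.Adj a b) :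
    ∃ x y, H.Adj x y ∧ ∀ z, H.Adj x z → z = y := by
  classical
  set S : Set ℕ := {n | ∃ (x y : W) (w : H.Walk x y), w.IsPath ∧ w.length = n} with hS
  have h1 : (1 : ℕ) ∈ S := by
    refine ⟨a, b, Walk.cons hab Walk.nil, ?_, rfl⟩
    rw [Walk.cons_isPath_iff]
    simp [hab.ne]
  have hbdd : BddAbove S := by
    refine ⟨Fintype.card W, fun n hn => ?_⟩
    obtain ⟨x, y, w, hw, rfl⟩ := hn
    exact le_of_lt hw.length_lt
  have hmem : sSup S ∈ S := Nat.sSup_mem ⟨1, h1⟩ hbdd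
  have hone : 1 ≤ sSup S := le_csSup hbdd h1
  obtain ⟨x, y, w, hw, hlen⟩ := hmem
  cases w with
  | nil =>
    rw [Walk.length_nil] at hlen
    omega
  | @cons _ c _ h q =>
    refine ⟨x, c, h, fun z hz => ?_⟩
    by_contra hzc
    by_cases hzs : z ∈ (Walk.cons h q).support
    · -- build a cycle
      have hxq : x ∉ q.support := ((Walk.cons_isPath_iff h q).1 hw).2
      have ht : ((Walk.cons h q).takeUntil z hzs).IsPath := hw.takeUntil hzs
      have hne : s(z, x) ∉ ((Walk.cons h q).takeUntil z hzs).edges := by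
        intro hmem2
        have hsub := Walk.edges_takeUntil_subset (Walk.cons h q) hzs hmem2
        rw [Walk.edges_cons] at hsub
        rcases List.mem_cons.1 hsub with h1' | h2'
        · rw [Sym2.eq_iff] at h1'
          rcases h1' with ⟨hzx, _⟩ | ⟨hzc', _⟩
          · exact hz.ne (hzx.symm)
          · exact hzc hzc'
        · exact hxq (Walk.snd_mem_support_of_mem_edges q h2')
      exact hH _ (Path.cons_isCycle ⟨_, ht⟩ hz.symm hne)
    · have hpath : (Walk.cons hz.symm (Walk.cons h q)).IsPath := by
        rw [Walk.cons_isPath_iff]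
        exact ⟨hw, hzs⟩
      have hin : (Walk.cons h q).length + 1 ∈ S :=
        ⟨z, y, Walk.cons hz.symm (Walk.cons h q), hpath, by simp⟩
      have h2 := le_csSup hbdd hin
      omega

/-- Delete two edges from a graph, keeping decidable adjacency. -/
def removeEdges (G : SimpleGraph V) (e₁ e₂ : Sym2 V) : SimpleGraph V where
  Adj a b := G.Adj a b ∧ s(a, b) ≠ e₁ ∧ s(a, b) ≠ e₂
  symm := by
    refine ⟨?_⟩
    intro a b hx
    obtain ⟨h, h1, h2⟩ := hx
    exact ⟨h.symm, by rwa [Sym2.eq_swap], by rwa [Sym2.eq_swap]⟩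
  loopless := ⟨fun a h => G.loopless.irrefl a h.1⟩

instance removeEdges.instDecidable {G : SimpleGraph V} [DecidableRel G.Adj] {e₁ e₂ : Sym2 V} :
    DecidableRel (removeEdges G e₁ e₂).Adj :=
  fun a b => inferInstanceAs (Decidable (G.Adj a b ∧ s(a, b) ≠ e₁ ∧ s(a, b) ≠ e₂))

lemma removeEdges_le {G : SimpleGraph V} {e₁ e₂ : Sym2 V} : removeEdges G e₁ e₂ ≤ G := by
  intro a b h
  exact h.1

lemma mem_removeEdges_edgeSet {G : SimpleGraph V} {e₁ e₂ : Sym2 V} (e : Sym2 V) :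
    e ∈ (removeEdges G e₁ e₂).edgeSet ↔ e ∈ G.edgeSet ∧ e ≠ e₁ ∧ e ≠ e₂ := by
  induction e using Sym2.ind with
  | _ a b => simp [removeEdges, SimpleGraph.mem_edgeSet]

lemma mem_incidenceFinset' {G : SimpleGraph V} [DecidableRel G.Adj] {w : V} {e : Sym2 V} :
    e ∈ G.incidenceFinset w ↔ e ∈ G.edgeSet ∧ w ∈ e := by
  rw [SimpleGraph.mem_incidenceFinset]
  exact Iff.rfl

lemma colorCount_congr {G G' : SimpleGraph V} [DecidableRel G.Adj] [DecidableRel G'.Adj]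
    {f f' : Sym2 V → Fin 2} {w : V}
    (hinc : G.incidenceFinset w = G'.incidenceFinset w)
    (hf : ∀ e ∈ G.incidenceFinset w, f e = f' e) (i : Fin 2) :
    colorCount G f w i = colorCount G' f' w i := by
  unfold colorCount
  rw [← hinc]
  congr 1
  apply Finset.filter_congr
  intro e he
  rw [hf e he]

lemma colorCount_add {G : SimpleGraph V} [DecidableRel G.Adj] (f : Sym2 V → Fin 2) (w : V) :
    colorCount G f w 0 + colorCount G f w 1 = (G.incidenceFinset w).card := by
  unfold colorCount
  have h : (G.incidenceFinset w).filter (fun e => f e = 1)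
      = (G.incidenceFinset w).filter (fun e => ¬ f e = 0) := by
    apply Finset.filter_congr
    intro e _
    exact (fin2_not_zero (f e)).symm
  rw [h]
  exact Finset.card_filter_add_card_filter_not (p := fun e => f e = 0)

/-- Monochromatic (or empty) at a vertex. -/
def MonoAt (G : SimpleGraph V) [DecidableRel G.Adj] (f : Sym2 V → Fin 2) (w : V) : Prop :=
  colorCount G f w 0 = 0 ∨ colorCount G f w 1 = 0

lemma main_aux (v : V) :
    ∀ (n : ℕ) (G : SimpleGraph V) (inst : DecidableRel G.Adj),
      G.edgeFinset.card ≤ n →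
      (G.induce ({v}ᶜ : Set V)).IsAcyclic →
      ∀ M : Finset V, v ∉ M →
        ∃ f : Sym2 V → Fin 2,
          (∀ w ∈ M, MonoAt G f w) ∧ (∀ w, w ∉ M → w ≠ v → OddAt G f w) := by
  intro n
  induction n using Nat.strong_induction_on with
  | _ n ih =>
  intro G inst hcard hF M hvM
  by_cases hT : ∃ x y : V, x ≠ v ∧ y ≠ v ∧ G.Adj x y
  · -- inductive step : there is an edge avoiding v
    obtain ⟨x0, y0, hx0, hy0, hadj0⟩ := hT
    -- find a leaf of the induced forest
    have hadj0' : (G.induce ({v}ᶜ : Set V)).Adj ⟨x0, hx0⟩ ⟨y0, hy0⟩ := hadj0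
    obtain ⟨⟨l, hlv0⟩, ⟨p, hpv0⟩, hlp', huniq'⟩ := exists_leaf hF hadj0'
    have hlv : l ≠ v := hlv0
    have hpv : p ≠ v := hpv0
    have hlp : G.Adj l p := hlp'
    have hlpne : l ≠ p := hlp.ne
    have huniq : ∀ x : V, x ≠ v → G.Adj l x → x = p := by
      intro x hxv hx
      have hx' : (⟨x, hxv⟩ : ({v}ᶜ : Set V)) = ⟨p, hpv0⟩ := huniq' ⟨x, hxv⟩ hx
      exact congrArg Subtype.val hx'
    set e₁ : Sym2 V := s(l, p) with he₁
    set e₂ : Sym2 V := s(l, v) with he₂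
    have he12 : e₁ ≠ e₂ := by
      rw [he₁, he₂]
      intro h
      exact hpv (Sym2.congr_right.1 h)
    set G' : SimpleGraph V := removeEdges G e₁ e₂ with hG'
    -- incidence set facts
    have hincp : G.incidenceFinset p = insert e₁ (G'.incidenceFinset p) := by
      ext e
      rw [Finset.mem_insert, mem_incidenceFinset', mem_incidenceFinset',
        mem_removeEdges_edgeSet]
      constructor
      · rintro ⟨he, hpe⟩
        by_cases h1 : e = e₁
        · exact Or.inl h1
        · refine Or.inr ⟨⟨he, h1, ?_⟩, hpe⟩
          rintro rfl
          rw [he₂, Sym2.mem_iff] at hpe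
          rcases hpe with rfl | rfl
          · exact hlpne rfl
          · exact hpv rfl
      · rintro (rfl | ⟨⟨he, _, _⟩, hpe⟩)
        · refine ⟨?_, ?_⟩
          · rw [he₁, SimpleGraph.mem_edgeSet]; exact hlp
          · rw [he₁, Sym2.mem_iff]; exact Or.inr rfl
        · exact ⟨he, hpe⟩
    have he1p : e₁ ∉ G'.incidenceFinset p := by
      rw [mem_incidenceFinset', mem_removeEdges_edgeSet]
      rintro ⟨⟨_, h, _⟩, _⟩
      exact h rfl
    have hincw : ∀ w : V, w ≠ l → w ≠ p → w ≠ v →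
        G'.incidenceFinset w = G.incidenceFinset w := by
      intro w hwl hwp hwv
      ext e
      rw [mem_incidenceFinset', mem_incidenceFinset', mem_removeEdges_edgeSet]
      constructor
      · rintro ⟨⟨he, _, _⟩, hwe⟩
        exact ⟨he, hwe⟩
      · rintro ⟨he, hwe⟩
        refine ⟨⟨he, ?_, ?_⟩, hwe⟩
        · rintro rfl
          rw [he₁, Sym2.mem_iff] at hwe
          rcases hwe with rfl | rfl
          · exact hwl rfl
          · exact hwp rfl
        · rintro rfl
          rw [he₂, Sym2.mem_iff] at hwe
          rcases hwe with rfl | rfl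
          · exact hwl rfl
          · exact hwv rfl
    have hinclEq : G.incidenceFinset l =
        if G.Adj l v then ({e₁, e₂} : Finset (Sym2 V)) else {e₁} := by
      have he1mem : e₁ ∈ G.edgeSet ∧ l ∈ e₁ := by
        constructor
        · rw [he₁, SimpleGraph.mem_edgeSet]; exact hlp
        · rw [he₁, Sym2.mem_iff]; exact Or.inl rfl
      by_cases hAlv : G.Adj l v
      · rw [if_pos hAlv]
        ext e
        rw [mem_incidenceFinset', Finset.mem_insert, Finset.mem_singleton]
        constructor
        · rintro ⟨he, hle⟩
          obtain ⟨z, rfl⟩ := Sym2.mem_iff_exists.1 hle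
          rw [SimpleGraph.mem_edgeSet] at he
          by_cases hzv : z = v
          · subst hzv; exact Or.inr rfl
          · exact Or.inl (by rw [he₁, huniq z hzv he])
        · rintro (rfl | rfl)
          · exact he1mem
          · constructor
            · rw [he₂, SimpleGraph.mem_edgeSet]; exact hAlv
            · rw [he₂, Sym2.mem_iff]; exact Or.inl rfl
      · rw [if_neg hAlv]
        ext e
        rw [mem_incidenceFinset', Finset.mem_singleton]
        constructor
        · rintro ⟨he, hle⟩
          obtain ⟨z, rfl⟩ := Sym2.mem_iff_exists.1 hle
          rw [SimpleGraph.mem_edgeSet] at he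
          have hzv : z ≠ v := by rintro rfl; exact hAlv he
          rw [he₁, huniq z hzv he]
        · rintro rfl
          exact he1mem
    -- edge count decreases
    have hlt : G'.edgeFinset.card < G.edgeFinset.card := by
      have hsub0 : G'.edgeFinset ⊆ G.edgeFinset := by
        intro e he
        rw [SimpleGraph.mem_edgeFinset] at he ⊢
        exact ((mem_removeEdges_edgeSet e).1 he).1
      apply Finset.card_lt_card
      refine (Finset.ssubset_iff_of_subset hsub0).2 ⟨e₁, ?_, ?_⟩
      · rw [SimpleGraph.mem_edgeFinset, he₁, SimpleGraph.mem_edgeSet]; exact hlp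
      · rw [SimpleGraph.mem_edgeFinset, mem_removeEdges_edgeSet]
        rintro ⟨_, h, _⟩
        exact h rfl
    -- acyclicity persists
    have hF' : (G'.induce ({v}ᶜ : Set V)).IsAcyclic := by
      refine acyclic_anti ?_ hF
      intro a b hab
      exact hab.1
    -- apply induction hypothesis
    set M' : Finset V := if G.degree p % 2 = 1 then insert p M else M with hM'
    have hvM' : v ∉ M' := by
      rw [hM']
      split
      · rw [Finset.mem_insert]
        rintro (rfl | h)
        · exact hpv rfl
        · exact hvM h
      · exact hvM
    have hMM' : M ⊆ M' := by
      rw [hM']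
      split
      · exact Finset.subset_insert _ _
      · exact Finset.Subset.refl _
    have hM'sub : ∀ w, w ∈ M' → w = p ∨ w ∈ M := by
      intro w hw
      rw [hM'] at hw
      revert hw
      split
      · rw [Finset.mem_insert]; exact id
      · exact Or.inr
    obtain ⟨f', hMono', hOdd'⟩ :=
      ih G'.edgeFinset.card (lt_of_lt_of_le hlt hcard) G'
        removeEdges.instDecidable le_rfl hF' M' hvM'
    -- define the new coloring
    set a : ℕ := colorCount G' f' p 0 with ha
    set b : ℕ := colorCount G' f' p 1 with hb
    set γ : Fin 2 :=
      if (p ∈ M ∨ G.degree p % 2 = 1) then (if a ≠ 0 then 0 else 1)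
      else (if a ≠ 0 then 1 else 0) with hγ
    set δ : Fin 2 := if l ∈ M then γ else (if γ = 0 then 1 else 0) with hδ
    set f : Sym2 V → Fin 2 :=
      fun e => if e = e₁ then γ else if e = e₂ then δ else f' e with hf
    have hfe₁ : f e₁ = γ := by rw [hf]; simp
    have hfe₂ : f e₂ = δ := by rw [hf]; simp [he12.symm]
    have hfother : ∀ e, e ≠ e₁ → e ≠ e₂ → f e = f' e := by
      intro e h1 h2
      rw [hf]
      simp [h1, h2]
    -- counts at p
    have hcntp : ∀ i, colorCount G f p i
        = colorCount G' f' p i + (if γ = i then 1 else 0) := by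
      intro i
      unfold colorCount
      rw [hincp, Finset.filter_insert]
      have hagr : ((G'.incidenceFinset p).filter (fun e => f e = i))
          = ((G'.incidenceFinset p).filter (fun e => f' e = i)) := by
        apply Finset.filter_congr
        intro e he
        have h1 : e ≠ e₁ := by rintro rfl; exact he1p he
        have h2 : e ≠ e₂ := by
          rintro rfl
          rw [mem_incidenceFinset'] at he
          obtain ⟨_, hpe⟩ := he
          rw [he₂, Sym2.mem_iff] at hpe
          rcases hpe with rfl | rfl
          · exact hlpne rfl
          · exact hpv rfl
        rw [hfother e h1 h2]
      by_cases hγi : γ = i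
      · rw [if_pos (by rw [hfe₁, hγi]), hagr, if_pos hγi,
          Finset.card_insert_of_notMem]
        intro hmem
        exact he1p (Finset.mem_filter.1 hmem).1
      · rw [if_neg (by rw [hfe₁]; exact hγi), hagr, if_neg hγi, Nat.add_zero]
    -- counts at l
    have hcntl : ∀ i, colorCount G f l i
        = (if γ = i then 1 else 0)
          + (if G.Adj l v then (if δ = i then 1 else 0) else 0) := by
      intro i
      unfold colorCount
      rw [hinclEq]
      by_cases hAlv : G.Adj l v
      · rw [if_pos hAlv, if_pos hAlv, Finset.card_filter, Finset.sum_pair he12,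
          hfe₁, hfe₂]
      · rw [if_neg hAlv, if_neg hAlv, Finset.card_filter, Finset.sum_singleton,
          hfe₁, Nat.add_zero]
    -- counts at other vertices
    have hcntw : ∀ w : V, w ≠ l → w ≠ p → w ≠ v → ∀ i,
        colorCount G f w i = colorCount G' f' w i := by
      intro w h1 h2 h3 i
      apply colorCount_congr (hincw w h1 h2 h3).symm
      intro e he
      rw [mem_incidenceFinset'] at he
      obtain ⟨heE, hwe⟩ := he
      have h4 : e ≠ e₁ := by
        rintro rfl
        rw [he₁, Sym2.mem_iff] at hwe
        rcases hwe with rfl | rfl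
        · exact h1 rfl
        · exact h2 rfl
      have h5 : e ≠ e₂ := by
        rintro rfl
        rw [he₂, Sym2.mem_iff] at hwe
        rcases hwe with rfl | rfl
        · exact h1 rfl
        · exact h3 rfl
      exact hfother e h4 h5
    -- degree of p
    have hdegp : G.degree p = a + b + 1 := by
      rw [← SimpleGraph.card_incidenceFinset_eq_degree, hincp,
        Finset.card_insert_of_notMem he1p, ha, hb, colorCount_add]
    -- the specification at p
    have hspecp0 : colorCount G f p 0 = a + (if γ = 0 then 1 else 0) := hcntp 0
    have hspecp1 : colorCount G f p 1 = b + (if γ = 1 then 1 else 0) := hcntp 1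
    have hmonop : p ∈ M → MonoAt G f p := by
      intro hpM
      have hm : a = 0 ∨ b = 0 := hMono' p (hMM' hpM)
      have hγ' : γ = (if a ≠ 0 then 0 else 1) := by rw [hγ, if_pos (Or.inl hpM)]
      show colorCount G f p 0 = 0 ∨ colorCount G f p 1 = 0
      rw [hspecp0, hspecp1]
      by_cases haz : a ≠ 0
      · right
        rcases hm with h | h
        · exact absurd h haz
        · rw [h, hγ', if_pos haz, if_neg (show ¬ (0 : Fin 2) = 1 by decide)]
      · left
        push_neg at haz
        rw [haz, hγ', if_neg (show ¬ (a ≠ 0) from fun h => h haz),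
          if_neg (show ¬ (1 : Fin 2) = 0 by decide)]
    have hoddp : p ∉ M → OddAt G f p := by
      intro hpM
      intro i
      by_cases hdo : G.degree p % 2 = 1
      · have hpM' : p ∈ M' := by
          rw [hM', if_pos hdo]
          exact Finset.mem_insert_self _ _
        have hm : a = 0 ∨ b = 0 := hMono' p hpM'
        have hγ' : γ = (if a ≠ 0 then 0 else 1) := by rw [hγ, if_pos (Or.inr hdo)]
        rcases fin2_cases i with rfl | rfl
        · rw [hspecp0]
          by_cases haz : a ≠ 0
          · right
            rw [hγ', if_pos haz, if_pos rfl, Nat.odd_iff]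
            rcases hm with h | h
            · exact absurd h haz
            · omega
          · left
            push_neg at haz
            rw [haz, hγ', if_neg (show ¬ (a ≠ 0) from fun h => h haz),
              if_neg (show ¬ (1 : Fin 2) = 0 by decide)]
        · rw [hspecp1]
          by_cases haz : a ≠ 0
          · left
            rcases hm with h | h
            · exact absurd h haz
            · rw [h, hγ', if_pos haz, if_neg (show ¬ (0 : Fin 2) = 1 by decide)]
          · right
            push_neg at haz
            rw [hγ', if_neg (show ¬ (a ≠ 0) from fun h => h haz), if_pos rfl, Nat.odd_iff]
            rcases hm with h | h
            · omega
            · omega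
      · have hpM' : p ∉ M' := by
          rw [hM', if_neg hdo]
          exact hpM
        have ho0 : a = 0 ∨ Odd a := hOdd' p hpM' hpv 0
        have ho1 : b = 0 ∨ Odd b := hOdd' p hpM' hpv 1
        rw [Nat.odd_iff] at ho0 ho1
        have hγ' : γ = (if a ≠ 0 then 1 else 0) := by
          rw [hγ, if_neg]
          rintro (h | h)
          · exact hpM h
          · exact hdo h
        rcases fin2_cases i with rfl | rfl
        · rw [hspecp0, Nat.odd_iff]
          by_cases haz : a ≠ 0
          · rw [hγ', if_pos haz, if_neg (show ¬ (1 : Fin 2) = 0 by decide)]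
            omega
          · push_neg at haz
            rw [hγ', if_neg (show ¬ (a ≠ 0) from fun h => h haz), if_pos rfl]
            omega
        · rw [hspecp1, Nat.odd_iff]
          by_cases haz : a ≠ 0
          · rw [hγ', if_pos haz, if_pos rfl]
            omega
          · push_neg at haz
            rw [hγ', if_neg (show ¬ (a ≠ 0) from fun h => h haz),
              if_neg (show ¬ (0 : Fin 2) = 1 by decide)]
            omega
    -- specification at l
    have hmonol : l ∈ M → MonoAt G f l := by
      intro hlM
      have hδ' : δ = γ := by rw [hδ, if_pos hlM]
      show colorCount G f l 0 = 0 ∨ colorCount G f l 1 = 0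
      rcases fin2_cases γ with h | h
      · right
        rw [hcntl 1, hδ', h]
        by_cases hAlv : G.Adj l v
        · rw [if_pos hAlv]; decide
        · rw [if_neg hAlv]; decide
      · left
        rw [hcntl 0, hδ', h]
        by_cases hAlv : G.Adj l v
        · rw [if_pos hAlv]; decide
        · rw [if_neg hAlv]; decide
    have hoddl : l ∉ M → OddAt G f l := by
      intro hlM i
      have hδ' : δ = (if γ = 0 then 1 else 0) := by rw [hδ, if_neg hlM]
      rw [hcntl i]
      by_cases hAlv : G.Adj l v
      · rw [if_pos hAlv, hδ']
        right
        have hval : (if γ = i then 1 else 0)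
            + (if (if γ = 0 then (1 : Fin 2) else 0) = i then 1 else 0) = 1 := by
          rcases fin2_cases γ with h | h <;> rcases fin2_cases i with rfl | rfl <;>
            rw [h] <;> decide
        rw [hval]
        exact odd_one
      · rw [if_neg hAlv, Nat.add_zero]
        by_cases hγi : γ = i
        · right
          rw [if_pos hγi]
          exact odd_one
        · left
          rw [if_neg hγi]
    refine ⟨f, ?_, ?_⟩
    · intro w hwM
      by_cases hwl : w = l
      · subst hwl; exact hmonol hwM
      by_cases hwp : w = p
      · subst hwp; exact hmonop hwM
      have hwv : w ≠ v := by rintro rfl; exact hvM hwM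
      have hm : colorCount G' f' w 0 = 0 ∨ colorCount G' f' w 1 = 0 := hMono' w (hMM' hwM)
      show colorCount G f w 0 = 0 ∨ colorCount G f w 1 = 0
      rw [hcntw w hwl hwp hwv 0, hcntw w hwl hwp hwv 1]
      exact hm
    · intro w hwM hwv
      by_cases hwl : w = l
      · subst hwl; exact hoddl hwM
      by_cases hwp : w = p
      · subst hwp; exact hoddp hwM
      have hwM' : w ∉ M' := by
        intro hw
        rcases hM'sub w hw with rfl | h
        · exact hwp rfl
        · exact hwM h
      intro i
      rw [hcntw w hwl hwp hwv i]
      exact hOdd' w hwM' hwv i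
  · -- base case : every edge is incident to v
    push_neg at hT
    refine ⟨fun _ => 0, ?_, ?_⟩
    · intro w _
      right
      unfold colorCount
      rw [Finset.card_eq_zero, Finset.filter_eq_empty_iff]
      intro e _
      simp
    · intro w _ hwv
      have hzero1 : colorCount G (fun _ => (0 : Fin 2)) w 1 = 0 := by
        unfold colorCount
        rw [Finset.card_eq_zero, Finset.filter_eq_empty_iff]
        intro e _
        simp
      have hsub : G.incidenceFinset w ⊆ {s(w, v)} := by
        intro e he
        rw [mem_incidenceFinset'] at he
        obtain ⟨heE, hwe⟩ := he
        obtain ⟨z, rfl⟩ := Sym2.mem_iff_exists.1 hwe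
        rw [SimpleGraph.mem_edgeSet] at heE
        rw [Finset.mem_singleton]
        by_cases hzv : z = v
        · rw [hzv]
        · exact absurd heE (by simpa using hT w z hwv hzv)
      have hle1 : colorCount G (fun _ => (0 : Fin 2)) w 0 ≤ 1 := by
        unfold colorCount
        calc ((G.incidenceFinset w).filter _).card
            ≤ (G.incidenceFinset w).card := Finset.card_le_card (Finset.filter_subset _ _)
          _ ≤ ({s(w, v)} : Finset (Sym2 V)).card := Finset.card_le_card hsub
          _ = 1 := Finset.card_singleton _
      intro i
      rcases fin2_cases i with rfl | rfl
      · rcases Nat.le_one_iff_eq_zero_or_eq_one.1 hle1 with h | h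
        · exact Or.inl h
        · exact Or.inr (by rw [h]; exact odd_one)
      · exact Or.inl hzero1

end OddForestAux

theorem odd_away_from_v_of_deleteVertex_forest (G : SimpleGraph V) [DecidableRel G.Adj]
    (v : V) (hF : (G.induce ({v}ᶜ : Set V)).IsAcyclic) :
    ∃ f : Sym2 V → Fin 2, ∀ w : V, w ≠ v → OddAt G f w := by
  have h1 := OddForestAux.main_aux v G.edgeFinset.card G inferInstance
  obtain ⟨f, _, hodd⟩ := h1 le_rfl hF ∅ (Finset.notMem_empty v)
  exact ⟨f, fun w hw => hodd w (Finset.notMem_empty w) hw⟩
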